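/- Let v be a divisorial valuation on a Noetherian local domain (R, 𝔪) of dimension n that is analytically unramified, with v centered at 𝔪. Then vol(v) := lim_{m→∞} ℓ(R/𝔟_m(v))·n!/m^n > 0, where 𝔟_m(v) = {f ∈ R | v(f) ≥ m}. -/

import Mathlib

set_option synthInstance.maxHeartbeats 400000

open ENNReal

/-- The transcendence degree of a `k`-algebra `K`. -/
noncomputable def trdeg (k K : Type*) [CommRing k] [CommRing K] [Algebra k K] :
    Cardinal :=
  ⨆ s : {s : Set K // AlgebraicIndependent k ((↑) : s → K)}, Cardinal.mk s.1

/-- The length `ℓ(R/I)` of the quotient `R/I`. -/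
noncomputable def idealColength (R : Type*) [CommRing R] (I : Ideal R) : ℕ∞ :=
  WithBot.unbotD 0 (Order.krullDim (Submodule R (R ⧸ I)))

/-- The volume of a graded sequence of ideals in an `n`-dimensional ring:
`lim_m ℓ(R/𝔞_m)·n!/m^n`. -/
noncomputable def volSeq (R : Type*) [CommRing R] (n : ℕ) (a : ℕ → Ideal R) : ℝ≥0∞ :=
  Filter.atTop.limsup fun m : ℕ =>
    ENat.toENNReal (idealColength R (a m)) * (Nat.factorial n) / (m : ℝ≥0∞) ^ n

set_option maxHeartbeats 1000000

lemma exists_ltSeries_span {R : Type*} [CommRing R] {β : Type*} (J : Ideal R) (w : β → R)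
    (deg : β → ℕ) (F : Finset β)
    (hstrict : ∀ a₀ ∈ F, ∀ G : Finset β, G ⊆ F → (∀ a ∈ G, deg a₀ ≤ deg a ∧ a ≠ a₀) →
      w a₀ ∉ J ⊔ Ideal.span (w '' G)) :
    ∃ p : LTSeries (Ideal R), p.length = F.card ∧ p.head = J ∧
      p.last = J ⊔ Ideal.span (w '' F) := by
  classical
  induction F using Finset.strongInduction with
  | _ F ih =>
    rcases F.eq_empty_or_nonempty with rfl | hne
    · exact ⟨RelSeries.singleton _ J, by simp, rfl, by simp⟩
    · obtain ⟨a₀, ha₀F, ha₀min⟩ := F.exists_min_image deg hne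
      set F' := F.erase a₀ with hF'
      obtain ⟨p, hlen, hhead, hlast⟩ := ih F' (F.erase_ssubset ha₀F)
        (fun a ha G hG hGd => hstrict a (F.erase_subset a₀ ha) G
          (hG.trans (F.erase_subset a₀)) hGd)
      have hmemnot : w a₀ ∉ J ⊔ Ideal.span (w '' F') := by
        refine hstrict a₀ ha₀F F' (F.erase_subset a₀) (fun a ha => ?_)
        exact ⟨ha₀min a (F.erase_subset a₀ ha), (Finset.mem_erase.mp ha).1⟩
      have hle : p.last ≤ J ⊔ Ideal.span (w '' F) := by
        rw [hlast]
        exact sup_le_sup_left (Ideal.span_mono (Set.image_mono (F.erase_subset a₀))) J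
      have hmem : w a₀ ∈ J ⊔ Ideal.span (w '' F) :=
        le_sup_right (α := Ideal R) (Ideal.subset_span ⟨a₀, by simpa using ha₀F, rfl⟩)
      have hlt : p.last < J ⊔ Ideal.span (w '' F) := by
        refine lt_of_le_of_ne hle (fun h => hmemnot ?_)
        rw [hlast] at h; rw [h]; exact hmem
      refine ⟨p.snoc _ hlt, ?_, ?_, ?_⟩
      · simpa [hlen, hF'] using Finset.card_erase_add_one ha₀F
      · simpa using hhead
      · simp



/-- Izumi-type positivity of the volume: let `(R, 𝔪)` be an `n`-dimensional Noetherian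
local domain which is analytically unramified, and let `v` be a divisorial valuation of
`R` centered at `𝔪`, i.e. given by a discrete valuation subring `A` of `Frac(R)`
containing `R`, whose maximal ideal contracts to `𝔪`, and whose residue field has
transcendence degree `n − 1` over the residue field of `R`.  Then
`vol(v) = lim_m ℓ(R/𝔟_m(v))·n!/m^n > 0`, where `𝔟_m(v) = {f ∈ R | v(f) ≥ m}`. -/
theorem stmt_18 {R : Type*} [CommRing R] [IsDomain R] [IsLocalRing R]
    [IsNoetherianRing R]
    (n : ℕ) (hn : 1 ≤ n) (hdim : ringKrullDim R = n)
    (hur : IsDomain (AdicCompletion (IsLocalRing.maximalIdeal R) R))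
    (A : ValuationSubring (FractionRing R))
    (hRA : ∀ r : R, algebraMap R (FractionRing R) r ∈ A)
    (hdvr : IsDiscreteValuationRing A)
    (hcenter : ∀ r : R,
      ((⟨algebraMap R (FractionRing R) r, hRA r⟩ : A) ∈ IsLocalRing.maximalIdeal A ↔
        r ∈ IsLocalRing.maximalIdeal R))
    (ρ : IsLocalRing.ResidueField R →+* IsLocalRing.ResidueField A)
    (hρ : ∀ r : R, ρ (IsLocalRing.residue R r) =
      IsLocalRing.residue A (⟨algebraMap R (FractionRing R) r, hRA r⟩ : A))
    (hdivisorial : @trdeg (IsLocalRing.ResidueField R) (IsLocalRing.ResidueField A)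
      _ _ ρ.toAlgebra = ((n - 1 : ℕ) : Cardinal))
    (b : ℕ → Ideal R)
    (hb : ∀ (m : ℕ) (f : R), f ∈ b m ↔
      (⟨algebraMap R (FractionRing R) f, hRA f⟩ : A) ∈
        (IsLocalRing.maximalIdeal A) ^ m) :
    0 < volSeq R n b := by
  classical
  haveI := hdvr
  obtain ⟨n', rfl⟩ : ∃ k, n = k + 1 := ⟨n - 1, (Nat.succ_pred_eq_of_pos hn).symm⟩
  set K := FractionRing R
  set kR := IsLocalRing.ResidueField R
  set kA := IsLocalRing.ResidueField A
  letI : Algebra kR kA := ρ.toAlgebra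
  -- the ring hom R → A
  let ι : R →+* A :=
    { toFun := fun r => ⟨algebraMap R K r, hRA r⟩
      map_one' := by ext; simp
      map_mul' := by intro r s; ext; simp
      map_zero' := by ext; simp
      map_add' := by intro r s; ext; simp }
  -- algebraically independent family of residues
  obtain ⟨t, ht⟩ : ∃ t : Fin n' → kA, AlgebraicIndependent kR t := by
    have hdiv : trdeg kR kA = ((n' + 1 - 1 : ℕ) : Cardinal) := hdivisorial
    rcases Nat.eq_zero_or_pos n' with h0 | h1
    · subst h0
      exact ⟨Fin.elim0, algebraicIndependent_empty_type⟩
    · by_contra hnex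
      push_neg at hnex
      have hle : trdeg kR kA ≤ ((n' - 1 : ℕ) : Cardinal) := by
        rw [trdeg]
        apply ciSup_le'
        rintro ⟨s, hs⟩
        by_contra hlt
        push_neg at hlt
        have hn'le : (n' : Cardinal) ≤ Cardinal.mk s := by
          have h0' : ((n' - 1 : ℕ) : Cardinal) < Cardinal.mk s := hlt
          have h2 := Order.succ_le_of_lt h0'
          rwa [← Cardinal.nat_succ, Nat.succ_eq_add_one, Nat.sub_add_cancel h1] at h2
        have hmk : Cardinal.mk (ULift.{_} (Fin n')) ≤ Cardinal.mk s := by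
          simpa [Cardinal.mk_uLift, Cardinal.mk_fin] using hn'le
        obtain ⟨emb⟩ := Cardinal.le_def _ _ |>.mp hmk
        have hinj : Function.Injective (fun i : Fin n' => emb ⟨i⟩) := by
          intro i j h
          exact congrArg ULift.down (emb.injective h)
        exact hnex (((↑) : s → kA) ∘ (fun i : Fin n' => emb ⟨i⟩)) (hs.comp _ hinj)
      rw [hdiv] at hle
      have : (n' + 1 - 1 : ℕ) ≤ (n' - 1 : ℕ) := by exact_mod_cast hle
      omega
  -- uniformizer
  obtain ⟨π, hπ⟩ := IsDiscreteValuationRing.exists_irreducible A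
  have hπ0 : π ≠ 0 := hπ.ne_zero
  have hmaxπ : IsLocalRing.maximalIdeal A = Ideal.span {π} :=
    (IsDiscreteValuationRing.irreducible_iff_uniformizer π).mp hπ
  -- element of the maximal ideal of R
  obtain ⟨x, hxm, hx0⟩ : ∃ x ∈ IsLocalRing.maximalIdeal R, x ≠ 0 := by
    rw [← Submodule.ne_bot_iff]
    intro hbot
    have hf : IsField R := IsLocalRing.isField_iff_maximalIdeal_eq.mpr hbot
    rw [ringKrullDim_eq_zero_of_isField hf] at hdim
    have : ((0 : ℕ) : WithBot ℕ∞) = ((n' + 1 : ℕ) : WithBot ℕ∞) := by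
      simpa using hdim
    exact Nat.succ_ne_zero n' (by exact_mod_cast this.symm)
  have hιinj : Function.Injective ι := by
    intro r s hrs
    apply IsFractionRing.injective R K
    exact congrArg Subtype.val hrs
  have hιx0 : ι x ≠ 0 := fun h => hx0 (hιinj (by rw [h, map_zero]))
  obtain ⟨e, u, hu⟩ := IsDiscreteValuationRing.eq_unit_mul_pow_irreducible hιx0 hπ
  have he : 1 ≤ e := by
    rcases Nat.eq_zero_or_pos e with h0 | h1
    · exfalso
      have hxmA : ι x ∈ IsLocalRing.maximalIdeal A := (hcenter x).mpr hxm
      have hux : IsUnit (ι x) := by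
        rw [hu, h0, pow_zero, mul_one]; exact u.isUnit
      exact IsLocalRing.notMem_maximalIdeal.mpr hux hxmA
    · exact h1
  -- data for each i : f i, g i ∈ R, α i unit of A with residue t i, factorization of g
  have H : ∀ i : Fin n', ∃ (fi gi : R) (αi : Aˣ) (ci : ℕ) (vi : Aˣ),
      IsLocalRing.residue A αi = t i ∧ gi ≠ 0 ∧
      (αi : A) * ι gi = ι fi ∧ ι gi = vi * π ^ ci := by
    intro i
    have hti : t i ≠ 0 := ht.ne_zero i
    obtain ⟨a, ha⟩ := IsLocalRing.residue_surjective (t i)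
    have hau : IsUnit a := by
      rw [← IsLocalRing.residue_ne_zero_iff_isUnit, ha]; exact hti
    obtain ⟨αu, hαu⟩ := hau
    obtain ⟨fi, gi, hgmem, hfgdiv⟩ := IsFractionRing.div_surjective (A := R) ((a : K))
    have hgi0 : gi ≠ 0 := nonZeroDivisors.ne_zero hgmem
    have hgK : algebraMap R K gi ≠ 0 := fun h => hgi0 (IsFractionRing.injective R K (by rw [h, map_zero]))
    have hfgK : (a : K) * algebraMap R K gi = algebraMap R K fi := by
      rw [← hfgdiv, div_mul_cancel₀ _ hgK]
    have hιg0 : ι gi ≠ 0 := fun h => hgi0 (hιinj (by rw [h, map_zero]))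
    obtain ⟨ci, vi, hvi⟩ := IsDiscreteValuationRing.eq_unit_mul_pow_irreducible hιg0 hπ
    refine ⟨fi, gi, αu, ci, vi, by rw [hαu]; exact ha, hgi0, ?_, hvi⟩
    ext
    push_cast
    rw [hαu]
    exact hfgK
  choose f g α c v hαt hg0 hfg hgf using H
  set D : ℕ := e + ∑ i, c i with hD
  have hD1 : 1 ≤ D := le_trans he (Nat.le_add_right e _)
  -- the n elements of R and the unit coefficients
  set W₀ : Aˣ := u * ∏ i, v i with hW₀
  set W : Fin (n' + 1) → Aˣ := Fin.cases W₀ (fun i => α i * W₀) with hW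
  set z : Fin (n' + 1) → R :=
    Fin.cases (x * ∏ i, g i) (fun i => x * (f i * ∏ j ∈ Finset.univ.erase i, g j)) with hz
  have hgfprod : ∀ s : Finset (Fin n'),
      ∏ j ∈ s, ι (g j) = (∏ j ∈ s, (v j : A)) * π ^ (∑ j ∈ s, c j) := by
    intro s
    rw [Finset.prod_congr rfl (fun j _ => hgf j), Finset.prod_mul_distrib,
      Finset.prod_pow_eq_pow_sum]
  have hzW : ∀ i, ι (z i) = (W i : A) * π ^ D := by
    intro i
    induction i using Fin.cases with
    | zero =>
      have h1 : ι (z 0) = ι x * ∏ j, ι (g j) := by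
        simp only [hz, Fin.cases_zero, map_mul, map_prod]
      rw [h1, hu, hgfprod, hD, pow_add]
      simp only [hW, Fin.cases_zero, hW₀, Units.val_mul,
        ← Units.coeHom_apply, map_prod, map_mul]
      ring
    | succ i =>
      have h1 : ι (z i.succ) = ι x * (ι (f i) * ∏ j ∈ Finset.univ.erase i, ι (g j)) := by
        simp only [hz, Fin.cases_succ, map_mul, map_prod]
      have hv : (∏ j, (v j : A)) = (v i : A) * ∏ j ∈ Finset.univ.erase i, (v j : A) :=
        (Finset.mul_prod_erase Finset.univ _ (Finset.mem_univ i)).symm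
      have hc : (∑ j, c j) = c i + ∑ j ∈ Finset.univ.erase i, c j :=
        (Finset.add_sum_erase Finset.univ _ (Finset.mem_univ i)).symm
      rw [h1, hu, ← hfg i, hgf i, hgfprod, hD, hc, pow_add, pow_add]
      simp only [hW, Fin.cases_succ, hW₀, Units.val_mul,
        ← Units.coeHom_apply, map_prod, map_mul]
      rw [← Finset.mul_prod_erase Finset.univ (fun x => (Units.coeHom _) (v x))
        (Finset.mem_univ i)]
      ring
  -- monomials
  set ζ : (Fin (n' + 1) → ℕ) → R := fun a => ∏ i, z i ^ a i with hζdef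
  set deg : (Fin (n' + 1) → ℕ) → ℕ := fun a => ∑ i, a i with hdegdef
  have hζι : ∀ a, ι (ζ a) = (∏ i, ((W i : A)) ^ a i) * π ^ (D * deg a) := by
    intro a
    simp only [hζdef, map_prod, map_pow]
    rw [Finset.prod_congr rfl (fun i _ => by rw [hzW i, mul_pow, ← pow_mul]),
      Finset.prod_mul_distrib, Finset.prod_pow_eq_pow_sum]
    congr 1
    simp only [hdegdef]
    rw [Finset.mul_sum]
  set res : ↥A →+* kA := IsLocalRing.residue ↥A with hresdef
  set w0 : kA := res (W₀ : ↥A) with hw0def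
  have hw00 : w0 ≠ 0 := by
    rw [hw0def]
    exact (IsLocalRing.residue_ne_zero_iff_isUnit _).mpr W₀.isUnit
  have hresW : ∀ a : Fin (n' + 1) → ℕ,
      res (∏ i, ((W i : A)) ^ a i) = w0 ^ deg a * ∏ i : Fin n', t i ^ a i.succ := by
    intro a
    rw [map_prod]
    simp only [map_pow]
    rw [Fin.prod_univ_succ]
    have h0 : res ((W 0 : A)) = w0 := by simp [hW, hw0def, hresdef]
    have hs : ∀ i : Fin n', res ((W i.succ : A)) = t i * w0 := by
      intro i
      simp only [hW, Fin.cases_succ, Units.val_mul, map_mul, hw0def, hresdef]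
      rw [hαt i]
    rw [h0, Finset.prod_congr rfl (fun i _ => by rw [hs i])]
    simp only [mul_pow]
    rw [Finset.prod_mul_distrib, Finset.prod_pow_eq_pow_sum]
    simp only [hdegdef]
    rw [Fin.sum_univ_succ]
    ring
  -- the key non-membership lemma
  have key : ∀ (m : ℕ) (a₀ : Fin (n' + 1) → ℕ), D * deg a₀ < m →
      ∀ G : Finset (Fin (n' + 1) → ℕ), (∀ a ∈ G, deg a₀ ≤ deg a ∧ a ≠ a₀) →
      ζ a₀ ∉ b m ⊔ Ideal.span (ζ '' ↑G) := by
    intro m a₀ hdm G hG hmem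
    set j : ℕ := D * deg a₀ with hjdef
    rw [Submodule.mem_sup] at hmem
    obtain ⟨β, hβ, y, hy, hsum⟩ := hmem
    have him : (ζ '' ↑G : Set R) = Set.range (fun a : ↥G => ζ ↑a) :=
      Set.image_eq_range ζ ↑G
    rw [← Ideal.submodule_span_eq, him, Submodule.mem_span_range_iff_exists_fun] at hy
    obtain ⟨s, hs⟩ := hy
    -- pass to A
    have hβA : π ^ (j + 1) ∣ ι β := by
      have h1 : ι β ∈ (IsLocalRing.maximalIdeal ↥A) ^ m := (hb m β).mp hβ
      rw [hmaxπ, Ideal.span_singleton_pow, Ideal.mem_span_singleton] at h1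
      exact dvd_trans (pow_dvd_pow π hdm) h1
    obtain ⟨q, hq⟩ := hβA
    set Ω : (Fin (n' + 1) → ℕ) → ↥A := fun a => ∏ i, ((W i : ↥A)) ^ a i with hΩdef
    set d : ↥G → ℕ := fun a => D * deg ↑a - j with hddef
    have hdeq : ∀ a : ↥G, D * deg (↑a : Fin (n' + 1) → ℕ) = j + d a := by
      intro a
      have h1 : j ≤ D * deg (↑a : Fin (n' + 1) → ℕ) :=
        Nat.mul_le_mul_left D (hG _ a.2).1
      simp only [hddef]
      omega
    have hζιΩ : ∀ a, ι (ζ a) = Ω a * π ^ (D * deg a) := fun a => hζι a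
    have E1 : Ω a₀ * π ^ j = π ^ (j + 1) * q +
        ∑ a : ↥G, ι (s a) * (Ω a * π ^ j * π ^ d a) := by
      have h3 : ι y = ∑ a : ↥G, ι (s a) * (Ω a * π ^ j * π ^ d a) := by
        rw [← hs, map_sum]
        refine Finset.sum_congr rfl (fun a _ => ?_)
        rw [smul_eq_mul, map_mul, hζιΩ, hdeq a, pow_add]
        ring
      calc Ω a₀ * π ^ j = ι (ζ a₀) := by rw [hζιΩ a₀, ← hjdef]
        _ = ι β + ι y := by rw [← map_add, hsum]
        _ = π ^ (j + 1) * q + ∑ a : ↥G, ι (s a) * (Ω a * π ^ j * π ^ d a) := by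
            rw [hq, h3]
    have E2 : Ω a₀ = π * q + ∑ a : ↥G, ι (s a) * (Ω a * π ^ d a) := by
      apply mul_left_cancel₀ (pow_ne_zero j hπ0)
      have expand : π ^ j * (π * q + ∑ a : ↥G, ι (s a) * (Ω a * π ^ d a)) =
          π ^ (j + 1) * q + ∑ a : ↥G, ι (s a) * (Ω a * π ^ j * π ^ d a) := by
        rw [mul_add, Finset.mul_sum, pow_succ]
        congr 1
        · ring
        · exact Finset.sum_congr rfl fun a _ => by ring
      rw [expand, ← E1]
      ring
    have hresπ : res π = 0 := by
      rw [hresdef]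
      exact Ideal.Quotient.eq_zero_iff_mem.mpr (hmaxπ ▸ Ideal.subset_span rfl)
    have E3 : res (Ω a₀) = ∑ a : ↥G, res (ι (s a)) * (res (Ω a) * (0 : kA) ^ d a) := by
      have h2 := congrArg res E2
      rw [map_add, map_mul, map_sum, hresπ, zero_mul, zero_add] at h2
      rw [h2]
      refine Finset.sum_congr rfl (fun a _ => ?_)
      rw [map_mul, map_mul, map_pow, hresπ]
    -- only degree-j terms survive
    have E4 : w0 ^ deg a₀ * ∏ i : Fin n', t i ^ a₀ i.succ =
        ∑ a ∈ Finset.univ.filter (fun a : ↥G => d a = 0),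
          res (ι (s a)) * (w0 ^ deg a₀ * ∏ i : Fin n', t i ^ (↑a : Fin (n' + 1) → ℕ) i.succ) := by
      rw [← hresW, E3, ← Finset.sum_filter_add_sum_filter_not Finset.univ (fun a : ↥G => d a = 0)]
      have hz2 : ∑ a ∈ Finset.univ.filter (fun a : ↥G => ¬ d a = 0),
          res (ι (s a)) * (res (Ω a) * (0 : kA) ^ d a) = 0 := by
        refine Finset.sum_eq_zero (fun a ha => ?_)
        rw [zero_pow (Finset.mem_filter.mp ha).2]
        ring
      rw [hz2, add_zero]
      refine Finset.sum_congr rfl (fun a ha => ?_)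
      have hda : d a = 0 := (Finset.mem_filter.mp ha).2
      have hdega : deg (↑a : Fin (n' + 1) → ℕ) = deg a₀ := by
        have := hdeq a
        rw [hda, add_zero, hjdef] at this
        exact Nat.eq_of_mul_eq_mul_left (Nat.lt_of_lt_of_le Nat.zero_lt_one hD1) this
      rw [hda, pow_zero, mul_one, hresW, hdega]
    -- build the polynomial witnessing dependence
    set toF : (Fin n' → ℕ) → (Fin n' →₀ ℕ) :=
      fun β => Finsupp.equivFunOnFinite.symm β with htoFdef
    set tr : (Fin (n' + 1) → ℕ) → (Fin n' → ℕ) := fun a i => a i.succ with htrdef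
    set P : MvPolynomial (Fin n') kR :=
      MvPolynomial.monomial (toF (tr a₀)) 1 -
        ∑ a ∈ Finset.univ.filter (fun a : ↥G => d a = 0),
          MvPolynomial.monomial (toF (tr ↑a)) (IsLocalRing.residue R (s a)) with hPdef
    have halg : (algebraMap kR kA) = ρ := rfl
    have haev : ∀ (β : Fin n' → ℕ) (r : kR),
        MvPolynomial.aeval t (MvPolynomial.monomial (toF β) r) =
          ρ r * ∏ i : Fin n', t i ^ β i := by
      intro β r
      rw [MvPolynomial.aeval_monomial, halg, Finsupp.prod_pow]
      refine congrArg (ρ r * ·) ?_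
      exact Finset.prod_congr rfl (fun i _ => by simp [htoFdef])
    have hresι : ∀ r : R, res (ι r) = ρ (IsLocalRing.residue R r) := fun r => (hρ r).symm
    have hPzero : MvPolynomial.aeval t P = 0 := by
      rw [hPdef, map_sub, map_sum, haev]
      rw [Finset.sum_congr rfl (fun (a : ↥G) _ => haev (tr ↑a) (IsLocalRing.residue R (s a)))]
      rw [map_one, one_mul]
      have hcancel := mul_left_cancel₀ (pow_ne_zero (deg a₀) hw00) (?_ :
        w0 ^ deg a₀ * ∏ i : Fin n', t i ^ tr a₀ i =
          w0 ^ deg a₀ * ∑ a ∈ Finset.univ.filter (fun a : ↥G => d a = 0),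
            ρ (IsLocalRing.residue R (s a)) * ∏ i : Fin n', t i ^ tr (↑a) i)
      · rw [hcancel, sub_self]
      · rw [Finset.mul_sum, E4]
        refine Finset.sum_congr rfl (fun a ha => ?_)
        rw [hresι]
        simp only [htrdef]
        ring
    have hP0 : P ≠ 0 := by
      have hco : MvPolynomial.coeff (toF (tr a₀)) P = 1 := by
        rw [hPdef, MvPolynomial.coeff_sub, MvPolynomial.coeff_monomial, if_pos rfl]
        rw [MvPolynomial.coeff_sum]
        have hzero : ∀ a ∈ Finset.univ.filter (fun a : ↥G => d a = 0),
            MvPolynomial.coeff (toF (tr a₀))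
              (MvPolynomial.monomial (toF (tr ↑a)) (IsLocalRing.residue R (s a))) = 0 := by
          intro a ha
          rw [MvPolynomial.coeff_monomial, if_neg]
          intro hcontra
          have htreq : tr (↑a : Fin (n' + 1) → ℕ) = tr a₀ :=
            Finsupp.equivFunOnFinite.symm.injective (by exact hcontra)
          have hda : d a = 0 := (Finset.mem_filter.mp ha).2
          have hdega : deg (↑a : Fin (n' + 1) → ℕ) = deg a₀ := by
            have := hdeq a
            rw [hda, add_zero, hjdef] at this
            exact Nat.eq_of_mul_eq_mul_left (Nat.lt_of_lt_of_le Nat.zero_lt_one hD1) this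
          have hzeroeq : (↑a : Fin (n' + 1) → ℕ) 0 = a₀ 0 := by
            have h1 : deg (↑a : Fin (n' + 1) → ℕ) =
                (↑a : Fin (n' + 1) → ℕ) 0 + ∑ i : Fin n', (↑a : Fin (n' + 1) → ℕ) i.succ := by
              simp only [hdegdef]; rw [Fin.sum_univ_succ]
            have h2 : deg a₀ = a₀ 0 + ∑ i : Fin n', a₀ i.succ := by
              simp only [hdegdef]; rw [Fin.sum_univ_succ]
            have h3 : ∑ i : Fin n', (↑a : Fin (n' + 1) → ℕ) i.succ = ∑ i : Fin n', a₀ i.succ := by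
              refine Finset.sum_congr rfl (fun i _ => ?_)
              exact congrFun htreq i
            omega
          have haa : (↑a : Fin (n' + 1) → ℕ) = a₀ := by
            funext i
            induction i using Fin.cases with
            | zero => exact hzeroeq
            | succ i => exact congrFun htreq i
          exact (hG _ a.2).2 haa
        rw [Finset.sum_eq_zero hzero, sub_zero]
      intro hP
      rw [hP, MvPolynomial.coeff_zero] at hco
      exact one_ne_zero hco.symm
    exact hP0 (ht (by rw [hPzero, map_zero]))
  -- colength lower bound for each m
  set C : ℕ := (n' + 1) * D with hCdef
  have hDpos : 0 < D := Nat.lt_of_lt_of_le Nat.zero_lt_one hD1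
  have hCpos : 0 < C := Nat.mul_pos (Nat.succ_pos n') hDpos
  have hltdiv : ∀ (a k : ℕ), 0 < k → a < (a / k + 1) * k := by
    intro a k hk
    calc a = k * (a / k) + a % k := (Nat.div_add_mod a k).symm
      _ < k * (a / k) + k := Nat.add_lt_add_left (Nat.mod_lt a hk) _
      _ = (a / k + 1) * k := by ring
  have hcol : ∀ m : ℕ, 1 ≤ m →
      (((((m - 1) / D) / (n' + 1) + 1) ^ (n' + 1) : ℕ) : ℕ∞) ≤ idealColength R (b m) := by
    intro m hm
    set M : ℕ := (m - 1) / D with hMdef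
    set Q : ℕ := M / (n' + 1) with hQdef
    set F : Finset (Fin (n' + 1) → ℕ) :=
      Fintype.piFinset (fun _ => Finset.range (Q + 1)) with hFdef
    have hFcard : F.card = (Q + 1) ^ (n' + 1) := by
      rw [hFdef, Fintype.card_piFinset]
      simp
    have hFdeg : ∀ a ∈ F, D * deg a < m := by
      intro a ha
      have h1 : ∀ i, a i ≤ Q := by
        intro i
        have h2 := (Fintype.mem_piFinset.mp ha) i
        rw [Finset.mem_range] at h2
        omega
      have h2 : deg a ≤ (n' + 1) * Q := by
        simp only [hdegdef]
        calc ∑ i, a i ≤ ∑ _i : Fin (n' + 1), Q := Finset.sum_le_sum (fun i _ => h1 i)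
          _ = (n' + 1) * Q := by simp [Finset.sum_const, Finset.card_univ, mul_comm]
      have h3 : (n' + 1) * Q ≤ M := by
        rw [hQdef, mul_comm]
        exact Nat.div_mul_le_self M (n' + 1)
      have h4 : D * M ≤ m - 1 := by
        rw [hMdef, mul_comm]
        exact Nat.div_mul_le_self (m - 1) D
      have h5 : D * deg a ≤ D * M := Nat.mul_le_mul_left D (le_trans h2 h3)
      omega
    obtain ⟨p, hplen, hphead, hplast⟩ := exists_ltSeries_span (b m) ζ deg F
      (fun a₀ ha₀ G hGF hGd => key m a₀ (hFdeg a₀ ha₀) G hGd)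
    -- map the chain into submodules of R ⧸ b m
    have hφmono : ∀ I J : Ideal R, b m ≤ I → I < J →
        Submodule.map (Ideal.Quotient.mkₐ R (b m)).toLinearMap I <
          Submodule.map (Ideal.Quotient.mkₐ R (b m)).toLinearMap J := by
      intro I J hbI hIJ
      refine lt_of_le_of_ne (Submodule.map_mono (le_of_lt hIJ)) ?_
      obtain ⟨y, hyJ, hyI⟩ := SetLike.exists_of_lt hIJ
      intro heq
      have hyφ : (Ideal.Quotient.mkₐ R (b m)).toLinearMap y ∈
          Submodule.map (Ideal.Quotient.mkₐ R (b m)).toLinearMap J :=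
        Submodule.mem_map_of_mem hyJ
      rw [← heq] at hyφ
      obtain ⟨w, hwI, hw⟩ := hyφ
      have hsub : w - y ∈ b m := by
        have : Ideal.Quotient.mk (b m) w = Ideal.Quotient.mk (b m) y := hw
        rwa [Ideal.Quotient.eq] at this
      have : y ∈ I := by
        have h6 : y = w - (w - y) := by ring
        rw [h6]
        exact Submodule.sub_mem I hwI (hbI hsub)
      exact hyI this
    have hble : ∀ i, b m ≤ p i := by
      intro i
      rw [← hphead]
      exact p.monotone (Fin.zero_le _)
    set q : LTSeries (Submodule R (R ⧸ b m)) :=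
      ⟨p.length, fun i => Submodule.map (Ideal.Quotient.mkₐ R (b m)).toLinearMap (p i),
        fun i => hφmono _ _ (hble _) (p.step i)⟩ with hqdef
    have hkrull : (((Q + 1) ^ (n' + 1) : ℕ) : WithBot ℕ∞) ≤
        Order.krullDim (Submodule R (R ⧸ b m)) := by
      have h7 := Order.LTSeries.length_le_krullDim q
      have h8 : q.length = (Q + 1) ^ (n' + 1) := by
        rw [hqdef]; exact hplen.trans hFcard
      rwa [h8] at h7
    rw [idealColength]
    rw [← WithBot.coe_natCast] at hkrull
    cases h : Order.krullDim (Submodule R (R ⧸ b m)) with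
    | bot =>
      rw [h] at hkrull
      exact absurd hkrull (WithBot.not_coe_le_bot _)
    | coe val =>
      rw [h] at hkrull
      simpa using (WithBot.coe_le_coe.mp hkrull)
  -- the uniform lower bound for the limsup terms
  set ε : ℝ≥0∞ := 1 / (C : ℝ≥0∞) ^ (n' + 1) with hεdef
  have hterm : ∀ m : ℕ, 1 ≤ m →
      ε ≤ ENat.toENNReal (idealColength R (b m)) * ((n' + 1).factorial : ℝ≥0∞) /
        (m : ℝ≥0∞) ^ (n' + 1) := by
    intro m hm
    set M : ℕ := (m - 1) / D with hMdef
    set Q : ℕ := M / (n' + 1) with hQdef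
    have hmC : m ≤ (Q + 1) * C := by
      have h1 : m - 1 < (M + 1) * D := hltdiv (m - 1) D hDpos
      have h2 : M < (Q + 1) * (n' + 1) := hltdiv M (n' + 1) (Nat.succ_pos n')
      have h3 : (M + 1) * D ≤ (Q + 1) * (n' + 1) * D := Nat.mul_le_mul_right D h2
      calc m = (m - 1) + 1 := by omega
        _ ≤ (M + 1) * D := h1
        _ ≤ (Q + 1) * (n' + 1) * D := h3
        _ = (Q + 1) * C := by rw [hCdef]; ring
    have hm0 : ((m : ℝ≥0∞)) ^ (n' + 1) ≠ 0 :=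
      pow_ne_zero _ (Nat.cast_ne_zero.mpr (by omega))
    have hmtop : ((m : ℝ≥0∞)) ^ (n' + 1) ≠ ⊤ := ENNReal.pow_ne_top (ENNReal.natCast_ne_top m)
    rw [ENNReal.le_div_iff_mul_le (Or.inl hm0) (Or.inl hmtop)]
    -- ε * m^(n'+1) ≤ ℓ * (n'+1)!
    have hℓ : (((Q + 1) ^ (n' + 1) : ℕ) : ℝ≥0∞) ≤
        ENat.toENNReal (idealColength R (b m)) := by
      have h9 := hcol m hm
      rw [← hMdef, ← hQdef] at h9
      have h10 := ENat.toENNReal_le.mpr h9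
      rwa [ENat.toENNReal_coe] at h10
    have hCtop : (C : ℝ≥0∞) ^ (n' + 1) ≠ ⊤ := ENNReal.pow_ne_top (ENNReal.natCast_ne_top C)
    have hC0 : (C : ℝ≥0∞) ^ (n' + 1) ≠ 0 :=
      pow_ne_zero _ (Nat.cast_ne_zero.mpr (by omega))
    have hmain : (m : ℝ≥0∞) ^ (n' + 1) ≤ (((Q + 1) ^ (n' + 1) : ℕ) : ℝ≥0∞) * (C : ℝ≥0∞) ^ (n' + 1) := by
      have h11 : (m : ℕ) ^ (n' + 1) ≤ ((Q + 1) * C) ^ (n' + 1) := Nat.pow_le_pow_left hmC _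
      have h12 := (Nat.cast_le (α := ℝ≥0∞)).mpr h11
      push_cast at h12 ⊢
      rwa [mul_pow] at h12
    calc ε * (m : ℝ≥0∞) ^ (n' + 1)
        ≤ ε * ((((Q + 1) ^ (n' + 1) : ℕ) : ℝ≥0∞) * (C : ℝ≥0∞) ^ (n' + 1)) :=
          mul_le_mul_right hmain ε
      _ = (((Q + 1) ^ (n' + 1) : ℕ) : ℝ≥0∞) * ((C : ℝ≥0∞) ^ (n' + 1) * ε) := by ring
      _ = (((Q + 1) ^ (n' + 1) : ℕ) : ℝ≥0∞) := by
          rw [hεdef, one_div, ENNReal.mul_inv_cancel hC0 hCtop, mul_one]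
      _ ≤ ENat.toENNReal (idealColength R (b m)) := hℓ
      _ ≤ ENat.toENNReal (idealColength R (b m)) * ((n' + 1).factorial : ℝ≥0∞) := by
          apply le_mul_of_one_le_right' 
          exact_mod_cast Nat.one_le_iff_ne_zero.mpr (Nat.factorial_ne_zero _)
  have hεpos : 0 < ε := by
    rw [hεdef]
    exact ENNReal.div_pos one_ne_zero (ENNReal.pow_ne_top (ENNReal.natCast_ne_top C))
  have hlim : ε ≤ volSeq R (n' + 1) b := by
    rw [volSeq]
    have hev : (fun _ : ℕ => ε) ≤ᶠ[Filter.atTop] fun m : ℕ =>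
        ENat.toENNReal (idealColength R (b m)) * ((n' + 1).factorial : ℝ≥0∞) /
          (m : ℝ≥0∞) ^ (n' + 1) :=
      Filter.eventually_atTop.mpr ⟨1, hterm⟩
    calc ε = Filter.limsup (fun _ : ℕ => ε) Filter.atTop := (Filter.limsup_const ε).symm
      _ ≤ _ := Filter.limsup_le_limsup hev
  exact lt_of_lt_of_le hεpos hlim
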